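/- arXiv:math/0109018 — 11 statements merged into one kernel-verified Lean document; each statement's English description precedes it below -/
import Mathlib

section
/- Let M_i (i=1,…,6) be the 2×2 matrices M_i = [[1, -1],[1, -T_i]] with T_i ∈ ℂ. If the product M_6 M_5 M_4 M_3 M_2 M_1 is a scalar multiple of the identity matrix, then T_1/T_4 = T_3/T_6 = T_5/T_2 = (T_1 + T_3 - 1 - T_1 T_2 T_3)/(1 - T_2), provided all denominators are nonzero. -/
theorem hexagon_T_relations (T : Fin 7 → ℂ)
    (M : Fin 7 → Matrix (Fin 2) (Fin 2) ℂ)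
    (hM : ∀ i, M i = !![1, -1; 1, -(T i)])
    (hρ : ∃ ρ : ℂ, ρ ≠ 0 ∧ M 6 * M 5 * M 4 * M 3 * M 2 * M 1 = ρ • 1)
    (h2 : T 2 ≠ 1) (hT4 : T 4 ≠ 0) (hT6 : T 6 ≠ 0) (hT2 : T 2 ≠ 0) :
    T 1 / T 4 = T 3 / T 6 ∧ T 3 / T 6 = T 5 / T 2 ∧
      T 5 / T 2 = (T 1 + T 3 - 1 - T 1 * T 2 * T 3) / (1 - T 2) := by
  obtain ⟨ρ, hρ0, hP⟩ := hρ
  rw [hM 1, hM 2, hM 3, hM 4, hM 5, hM 6] at hP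
  have h11 := congrFun (congrFun hP 0) 0
  have h12 := congrFun (congrFun hP 0) 1
  have h21 := congrFun (congrFun hP 1) 0
  have h22 := congrFun (congrFun hP 1) 1
  simp [Matrix.mul_apply, Fin.sum_univ_succ, Matrix.smul_apply, Matrix.one_apply] at h11 h12 h21 h22
  have h2' : (1:ℂ) - T 2 ≠ 0 := sub_ne_zero.2 (Ne.symm h2)
  have hρval : ρ = (1 - T 2) * ((1 - T 5) * (1 - T 3 * T 4)) := by
    linear_combination -h11
  have h5' : (1:ℂ) - T 5 ≠ 0 := by
    intro h; apply hρ0; rw [hρval, h]; ring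
  have h34 : (1:ℂ) - T 3 * T 4 ≠ 0 := by
    intro h; apply hρ0; rw [hρval, h]; ring
  have hE1 : T 1 * T 2 * (1 - T 3 * T 4) - T 1 * (1 - T 4) - T 4 * (1 - T 3) = 0 := by
    have key : ((1:ℂ) - T 5) *
        (T 1 * T 2 * (1 - T 3 * T 4) - T 1 * (1 - T 4) - T 4 * (1 - T 3)) = 0 := by
      linear_combination h12
    exact (mul_eq_zero.mp key).resolve_left h5'
  have hE2 : T 6 * (1 - T 5) - T 3 * T 6 * (1 - T 4 * T 5) + T 3 * (1 - T 4) = 0 := by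
    have key : ((1:ℂ) - T 2) *
        (T 6 * (1 - T 5) - T 3 * T 6 * (1 - T 4 * T 5) + T 3 * (1 - T 4)) = 0 := by
      linear_combination h21
    exact (mul_eq_zero.mp key).resolve_left h2'
  have hF : T 6 - T 5 + T 4 - T 4 * T 5 * T 6 + T 3 - T 3 * T 6 - 2 * (T 3 * T 4)
      + T 3 * T 4 * T 5 + T 3 * T 4 * T 5 * T 6 - T 2 + T 2 * T 5 + T 2 * T 3 * T 4
      - T 2 * T 3 * T 4 * T 5 + T 1 - T 1 * T 5 * T 6 - T 1 * T 4 + T 1 * T 4 * T 5 * T 6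
      - T 1 * T 2 * T 6 + T 1 * T 2 * T 5 * T 6 - T 1 * T 2 * T 3 + T 1 * T 2 * T 3 * T 6
      + T 1 * T 2 * T 3 * T 4 - T 1 * T 2 * T 3 * T 4 * T 5 * T 6 = 0 := by
    linear_combination h11 - h22
  have hG0 : T 1 * T 6 - T 3 * T 4 = 0 := by
    have key : ((1 - T 2) * ((1 - T 5) * (1 - T 3 * T 4))) * (T 1 * T 6 - T 3 * T 4) = 0 := by
      linear_combination (T 3 * ((1 - T 6) - T 4 * (1 - T 5 * T 6))) * hE1
        + (T 1 * (1 - T 2)) * hE2 - (T 3 * T 4) * hF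
    exact (mul_eq_zero.mp key).resolve_left
      (mul_ne_zero h2' (mul_ne_zero h5' h34))
  have hG1 : T 2 * T 3 - T 5 * T 6 = 0 := by
    have key : ((1 - T 5) * (1 - T 3 * T 4)) * (T 2 * T 3 - T 5 * T 6) = 0 := by
      linear_combination (T 1 + T 3 - T 5 - T 1 * T 2 * T 3) * hE2 - T 3 * hF
        - ((1 - T 5) * (1 - T 3)) * hG0
    exact (mul_eq_zero.mp key).resolve_left (mul_ne_zero h5' h34)
  have hG2 : T 5 * (1 - T 2) - T 2 * (T 1 + T 3 - 1 - T 1 * T 2 * T 3) = 0 := by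
    linear_combination (T 5 * T 6 - 1) * hE1 + hE2 - hF
      + (T 2 * T 5 - T 5 - T 2 + T 2 * T 3) * hG0
      + (T 3 * T 4 + T 1 * T 2 - 1 - T 1) * hG1
  refine ⟨?_, ?_, ?_⟩
  · field_simp
    linear_combination hG0
  · field_simp
    linear_combination hG1
  · rw [div_eq_div_iff hT2 h2']
    linear_combination hG2
end

section
/- For six pairwise distinct complex numbers z1,…,z6, if there exists a Möbius transformation M with M(z1)=z4, M(z2)=z5, M(z3)=z6 and M(z4)=z1 (a Möbius involution swapping opposite points), then the multi-ratio m(z1,z2,z3,z4,z5,z6) := ((z1-z2)/(z2-z3))·((z3-z4)/(z4-z5))·((z5-z6)/(z6-z1)) equals -1. -/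
theorem multiRatio_of_moebius_involution (z1 z2 z3 z4 z5 z6 : ℂ)
    (hdist : Function.Injective ![z1, z2, z3, z4, z5, z6])
    (hM : ∃ a b c d : ℂ, a * d - b * c ≠ 0 ∧
      c * z1 + d ≠ 0 ∧ c * z2 + d ≠ 0 ∧ c * z3 + d ≠ 0 ∧ c * z4 + d ≠ 0 ∧
      (a * z1 + b) / (c * z1 + d) = z4 ∧
      (a * z2 + b) / (c * z2 + d) = z5 ∧
      (a * z3 + b) / (c * z3 + d) = z6 ∧
      (a * z4 + b) / (c * z4 + d) = z1) :
    ((z1 - z2) / (z2 - z3)) * ((z3 - z4) / (z4 - z5)) *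
      ((z5 - z6) / (z6 - z1)) = -1 := by
  obtain ⟨a, b, c, d, hΔ, n1, n2, n3, n4, m1, m2, m3, m4⟩ := hM
  rw [div_eq_iff n1] at m1
  rw [div_eq_iff n2] at m2
  rw [div_eq_iff n3] at m3
  rw [div_eq_iff n4] at m4
  have h14 : z1 ≠ z4 := by
    have := hdist.ne (show (0 : Fin 6) ≠ 3 by decide); simpa using this
  have h23 : z2 ≠ z3 := by
    have := hdist.ne (show (1 : Fin 6) ≠ 2 by decide); simpa using this
  have h45 : z4 ≠ z5 := by
    have := hdist.ne (show (3 : Fin 6) ≠ 4 by decide); simpa using this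
  have h61 : z6 ≠ z1 := by
    have := hdist.ne (show (5 : Fin 6) ≠ 0 by decide); simpa using this
  have e1 : (z4 - z5) * ((c * z1 + d) * (c * z2 + d)) = (a * d - b * c) * (z1 - z2) := by
    linear_combination (c * z1 + d) * m2 - (c * z2 + d) * m1
  have e2 : (z5 - z6) * ((c * z2 + d) * (c * z3 + d)) = (a * d - b * c) * (z2 - z3) := by
    linear_combination (c * z2 + d) * m3 - (c * z3 + d) * m2
  have e3 : (z6 - z1) * ((c * z3 + d) * (c * z4 + d)) = (a * d - b * c) * (z3 - z4) := by
    linear_combination (c * z3 + d) * m4 - (c * z4 + d) * m3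
  have e4 : (c * z1 + d) * (c * z4 + d) = -(a * d - b * c) := by
    have h : z4 - z1 ≠ 0 := sub_ne_zero.2 (Ne.symm h14)
    apply mul_left_cancel₀ h
    linear_combination (c * z1 + d) * m4 - (c * z4 + d) * m1
  -- key: (z4-z5)(z6-z1) D2 D3 = -Δ (z1-z2)(z3-z4)
  have key : (z4 - z5) * (z6 - z1) * ((c * z2 + d) * (c * z3 + d)) =
      -((a * d - b * c) * ((z1 - z2) * (z3 - z4))) := by
    apply mul_left_cancel₀ hΔ
    linear_combination (z4 - z5) * (z6 - z1) * ((c * z2 + d) * (c * z3 + d)) * e4 -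
      ((z6 - z1) * ((c * z3 + d) * (c * z4 + d))) * e1 - ((a * d - b * c) * (z1 - z2)) * e3
  have hD23 : (c * z2 + d) * (c * z3 + d) ≠ 0 := mul_ne_zero n2 n3
  have h23' : z2 - z3 ≠ 0 := sub_ne_zero.2 h23
  have h45' : z4 - z5 ≠ 0 := sub_ne_zero.2 h45
  have h61' : z6 - z1 ≠ 0 := sub_ne_zero.2 h61
  field_simp
  apply mul_right_cancel₀ hD23
  linear_combination (z1 - z2) * (z3 - z4) * e2 + (z2 - z3) * key
end

section
/- Let z1,…,z6 be pairwise distinct complex numbers and let M be the (unique) Möbius transformation sending z1,z2,z3 to z4,z5,z6. If the multi-ratio m(z1,…,z6) = -1, then M(z4) = z1, M(z5) = z2 and M(z6) = z3; in particular M is an involution on these six points. -/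
theorem moebius_involution_of_multiRatio (z1 z2 z3 z4 z5 z6 a b c d : ℂ)
    (hdist : Function.Injective ![z1, z2, z3, z4, z5, z6])
    (hdet : a * d - b * c ≠ 0)
    (hp1 : c * z1 + d ≠ 0) (hp2 : c * z2 + d ≠ 0) (hp3 : c * z3 + d ≠ 0)
    (hp4 : c * z4 + d ≠ 0) (hp5 : c * z5 + d ≠ 0) (hp6 : c * z6 + d ≠ 0)
    (h1 : (a * z1 + b) / (c * z1 + d) = z4)
    (h2 : (a * z2 + b) / (c * z2 + d) = z5)
    (h3 : (a * z3 + b) / (c * z3 + d) = z6)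
    (hmr : ((z1 - z2) / (z2 - z3)) * ((z3 - z4) / (z4 - z5)) *
      ((z5 - z6) / (z6 - z1)) = -1) :
    (a * z4 + b) / (c * z4 + d) = z1 ∧
    (a * z5 + b) / (c * z5 + d) = z2 ∧
    (a * z6 + b) / (c * z6 + d) = z3 := by
  -- pairwise distinctness facts
  have hne : ∀ i j : Fin 6, i ≠ j → ![z1, z2, z3, z4, z5, z6] i ≠ ![z1, z2, z3, z4, z5, z6] j :=
    fun i j hij h => hij (hdist h)
  have h12 : z1 ≠ z2 := hne 0 1 (by decide)
  have h13 : z1 ≠ z3 := hne 0 2 (by decide)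
  have h23 : z2 ≠ z3 := hne 1 2 (by decide)
  have h45 : z4 ≠ z5 := hne 3 4 (by decide)
  have h61 : z6 ≠ z1 := hne 5 0 (by decide)
  have s12 : z1 - z2 ≠ 0 := sub_ne_zero.mpr h12
  have s23 : z2 - z3 ≠ 0 := sub_ne_zero.mpr h23
  have s31 : z3 - z1 ≠ 0 := sub_ne_zero.mpr h13.symm
  have s45 : z4 - z5 ≠ 0 := sub_ne_zero.mpr h45
  have s61 : z6 - z1 ≠ 0 := sub_ne_zero.mpr h61
  -- cleared forms of the hypotheses
  have hA1 : a * z1 + b = z4 * (c * z1 + d) := by rw [div_eq_iff hp1] at h1; exact h1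
  have hA2 : a * z2 + b = z5 * (c * z2 + d) := by rw [div_eq_iff hp2] at h2; exact h2
  have hA3 : a * z3 + b = z6 * (c * z3 + d) := by rw [div_eq_iff hp3] at h3; exact h3
  have hG : (z1 - z2) * (z3 - z4) * (z5 - z6) + (z2 - z3) * (z4 - z5) * (z6 - z1) = 0 := by
    field_simp at hmr
    linear_combination hmr
  -- the key fact: a + d = 0
  have key : a + d = 0 := by
    have id1 : (z1*z5 - z1*z6 - z2*z4 + z2*z6 + z3*z4 - z3*z5) * (a + d) =
        -(c * ((z1 - z2) * (z3 - z4) * (z5 - z6) + (z2 - z3) * (z4 - z5) * (z6 - z1))) := by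
      linear_combination ((z5-z6)+(z2-z3)) * hA1 + ((z6-z4)-(z1-z3)) * hA2 +
        ((z4-z5)+(z1-z2)) * hA3
    rw [hG, mul_zero, neg_zero] at id1
    by_cases hD3 : z1*z5 - z1*z6 - z2*z4 + z2*z6 + z3*z4 - z3*z5 = 0
    · -- degenerate case: the map must be affine, i.e. c = 0
      have id2 : c * (z2*z3*z6 - z2*z3*z5 - z1*z3*z6 + z1*z3*z4 + z1*z2*z5 - z1*z2*z4) =
          -(d * (z1*z5 - z1*z6 - z2*z4 + z2*z6 + z3*z4 - z3*z5)) := by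
        linear_combination (z2-z3) * hA1 - (z1-z3) * hA2 + (z1-z2) * hA3
      rw [hD3, mul_zero, neg_zero] at id2
      have hMd : z2*z3*z6 - z2*z3*z5 - z1*z3*z6 + z1*z3*z4 + z1*z2*z5 - z1*z2*z4 =
          (z4 - z5) * ((z2 - z3) * (z3 - z1)) := by
        linear_combination z3 * hD3
      have hMdne : z2*z3*z6 - z2*z3*z5 - z1*z3*z6 + z1*z3*z4 + z1*z2*z5 - z1*z2*z4 ≠ 0 := by
        rw [hMd]; exact mul_ne_zero s45 (mul_ne_zero s23 s31)
      have hc : c = 0 := by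
        rcases mul_eq_zero.mp id2 with h | h
        · exact h
        · exact absurd h hMdne
      -- now the affine case
      have had : a * d ≠ 0 := by
        have := hdet; rw [hc] at this; simpa using this
      have ha : a ≠ 0 := fun h => had (by rw [h, zero_mul])
      have hd : d ≠ 0 := fun h => had (by rw [h, mul_zero])
      have hw4 : d * z4 = a * z1 + b := by linear_combination -hA1 - z1*z4 * hc
      have hw5 : d * z5 = a * z2 + b := by linear_combination -hA2 - z2*z5 * hc
      have hw6 : d * z6 = a * z3 + b := by linear_combination -hA3 - z3*z6 * hc
      have haff : d^3 * ((a + d) * (a * ((z1 - z2) * ((z2 - z3) * (z3 - z1))))) = 0 := by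
        linear_combination d^5 * hG +
          (z3*z6*d^4 + (-1)*z2*z5*d^4 + (-1)*z1*z6*d^4 + z1*z5*d^4 + (-1)*z1*z3*d^4 + z1*z2*d^4) * hw4 +
          ((-1)*z3*z6*d^4 + (-1)*z2*b*d^3 + z2*z6*d^4 + z2*z3*d^4 + z1*b*d^3 + (-1)*z1*z2*d^4 + (-1)*z1*z2*a*d^3 + z1^2*a*d^3) * hw5 +
          (z2*b*d^3 + (-1)*z2*z3*d^4 + (-1)*z2*z3*a*d^3 + z2^2*a*d^3 + (-1)*z1*b*d^3 + z1*z3*d^4 + z1*z3*a*d^3 + (-1)*z1^2*a*d^3) * hw6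
      have h3ne : d^3 ≠ 0 := pow_ne_zero 3 hd
      have hrest : (a + d) * (a * ((z1 - z2) * ((z2 - z3) * (z3 - z1)))) = 0 :=
        (mul_eq_zero.mp haff).resolve_left h3ne
      have hxne : a * ((z1 - z2) * ((z2 - z3) * (z3 - z1))) ≠ 0 :=
        mul_ne_zero ha (mul_ne_zero s12 (mul_ne_zero s23 s31))
      exact (mul_eq_zero.mp hrest).resolve_right hxne
    · exact (mul_eq_zero.mp id1).resolve_left hD3
  refine ⟨?_, ?_, ?_⟩
  · rw [div_eq_iff hp4]; linear_combination hA1 + (z4 - z1) * key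
  · rw [div_eq_iff hp5]; linear_combination hA2 + (z5 - z2) * key
  · rw [div_eq_iff hp6]; linear_combination hA3 + (z6 - z3) * key
end

section
/- Suppose z : ℤ² → ℂ satisfies the cross-ratio equation q(z_{m,n}, z_{m+1,n}, z_{m+1,n+1}, z_{m,n+1}) = q for all (m,n) for some fixed q ∈ ℂ (with all relevant differences nonzero). Then for every (m,n), the discrete Toda-type equation holds: 1/(z_{m,n}-z_{m+1,n+1}) + 1/(z_{m,n}-z_{m-1,n-1}) = 1/(z_{m,n}-z_{m+1,n-1}) + 1/(z_{m,n}-z_{m-1,n+1}). -/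
lemma crt_clear (N D q : ℂ) (hq0 : q ≠ 0) (h : N / D = q) : N = q * D := by
  rcases eq_or_ne D 0 with hD | hD
  · rw [hD, div_zero] at h; exact absurd h.symm hq0
  · rw [div_eq_iff hD] at h; exact h

lemma crt_key (z a b A q : ℂ) (hq1 : q ≠ 1)
    (hza : z ≠ a) (hzb : z ≠ b) (hzA : z ≠ A)
    (heq : (a - z) * (b - A) = q * ((A - a) * (z - b))) :
    1 / (z - A) = (q / (z - a) - 1 / (z - b)) / (q - 1) := by
  have ha : z - a ≠ 0 := sub_ne_zero.mpr hza
  have hb : z - b ≠ 0 := sub_ne_zero.mpr hzb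
  have hA : z - A ≠ 0 := sub_ne_zero.mpr hzA
  have hq : q - 1 ≠ 0 := sub_ne_zero.mpr hq1
  have h5 : q / (z - a) - 1 / (z - b) = (q * (z - b) - (z - a)) / ((z - a) * (z - b)) := by
    field_simp
  rw [h5, div_div, div_eq_div_iff hA (mul_ne_zero (mul_ne_zero ha hb) hq)]
  linear_combination -heq

theorem crossRatio_implies_toda (z : ℤ → ℤ → ℂ) (q : ℂ)
    (hq0 : q ≠ 0) (hq1 : q ≠ 1)
    (hcr : ∀ m n : ℤ,
      ((z (m+1) n - z m n) * (z m (n+1) - z (m+1) (n+1))) /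
        ((z (m+1) (n+1) - z (m+1) n) * (z m n - z m (n+1))) = q)
    (hne1 : ∀ m n : ℤ, z m n ≠ z (m+1) n)
    (hne2 : ∀ m n : ℤ, z m n ≠ z m (n+1))
    (hne3 : ∀ m n : ℤ, z m n ≠ z (m+1) (n+1))
    (hne4 : ∀ m n : ℤ, z m n ≠ z (m+1) (n-1)) :
    ∀ m n : ℤ,
      1 / (z m n - z (m+1) (n+1)) + 1 / (z m n - z (m-1) (n-1)) =
        1 / (z m n - z (m+1) (n-1)) + 1 / (z m n - z (m-1) (n+1)) := by
  intro m n
  have e1 : m - 1 + 1 = m := by ring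
  have e2 : n - 1 + 1 = n := by ring
  have e3 : n + 1 - 1 = n := by ring
  -- cleared cross-ratio equations at the four quads around (m,n)
  have q1 := crt_clear _ _ _ hq0 (hcr m n)
  have q2 := crt_clear _ _ _ hq0 (hcr (m-1) (n-1))
  have q3 := crt_clear _ _ _ hq0 (hcr m (n-1))
  have q4 := crt_clear _ _ _ hq0 (hcr (m-1) n)
  rw [e1, e2] at q2
  rw [e2] at q3
  rw [e1] at q4
  -- nonvanishing facts
  have ha : z m n ≠ z (m+1) n := hne1 m n
  have hb : z m n ≠ z m (n+1) := hne2 m n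
  have hc : z m n ≠ z (m-1) n := by
    have := hne1 (m-1) n; rw [e1] at this; exact this.symm
  have hd : z m n ≠ z m (n-1) := by
    have := hne2 m (n-1); rw [e2] at this; exact this.symm
  have hA : z m n ≠ z (m+1) (n+1) := hne3 m n
  have hC : z m n ≠ z (m-1) (n-1) := by
    have := hne3 (m-1) (n-1); rw [e1, e2] at this; exact this.symm
  have hD : z m n ≠ z (m+1) (n-1) := hne4 m n
  have hB : z m n ≠ z (m-1) (n+1) := by
    have := hne4 (m-1) (n+1); rw [e1, e3] at this; exact this.symm
  have h1 := crt_key (z m n) (z (m+1) n) (z m (n+1)) (z (m+1) (n+1)) q hq1 ha hb hA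
    (by linear_combination q1)
  have h2 := crt_key (z m n) (z (m-1) n) (z m (n-1)) (z (m-1) (n-1)) q hq1 hc hd hC
    (by linear_combination q2)
  have h3 := crt_key (z m n) (z (m+1) n) (z m (n-1)) (z (m+1) (n-1)) q hq1 ha hd hD
    (by linear_combination q3)
  have h4 := crt_key (z m n) (z (m-1) n) (z m (n+1)) (z (m-1) (n+1)) q hq1 hc hb hB
    (by linear_combination q4)
  rw [h1, h2, h3, h4]
  ring
end

section
/- Fix q ∈ ℂ, q ≠ 0, 1. Let z, w1, w2, w3, w4, z1, z2, z3, z4 be complex numbers (all distinct from z) satisfying the three equations (q-1)/(z-z1) = q/(z-w4) - 1/(z-w1), (q⁻¹-1)/(z-z2) = q⁻¹/(z-w1) - 1/(z-w2), (q-1)/(z-z3) = q/(z-w2) - 1/(z-w3). Then the fourth equation (q⁻¹-1)/(z-z4) = q⁻¹/(z-w3) - 1/(z-w4) holds if and only if 1/(z-z1) + 1/(z-z3) = 1/(z-z2) + 1/(z-z4). -/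
set_option maxHeartbeats 2000000

theorem fourth_crossRatio_iff_toda (q z w1 w2 w3 w4 z1 z2 z3 z4 : ℂ)
    (hq0 : q ≠ 0) (hq1 : q ≠ 1)
    (hz1 : z ≠ z1) (hz2 : z ≠ z2) (hz3 : z ≠ z3) (hz4 : z ≠ z4)
    (hw1 : z ≠ w1) (hw2 : z ≠ w2) (hw3 : z ≠ w3) (hw4 : z ≠ w4)
    (e1 : (q - 1) / (z - z1) = q / (z - w4) - 1 / (z - w1))
    (e2 : (q⁻¹ - 1) / (z - z2) = q⁻¹ / (z - w1) - 1 / (z - w2))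
    (e3 : (q - 1) / (z - z3) = q / (z - w2) - 1 / (z - w3)) :
    ((q⁻¹ - 1) / (z - z4) = q⁻¹ / (z - w3) - 1 / (z - w4)) ↔
      1 / (z - z1) + 1 / (z - z3) = 1 / (z - z2) + 1 / (z - z4) := by
  have hq : q * q⁻¹ = 1 := mul_inv_cancel₀ hq0
  have hqm : q - 1 ≠ 0 := sub_ne_zero_of_ne hq1
  constructor
  · intro e4
    have key : (q - 1) * ((1 / (z - z1) + 1 / (z - z3)) - (1 / (z - z2) + 1 / (z - z4))) = 0 := by
      linear_combination e1 + e3 + q * e2 + q * e4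
        - (1 / (z - z2) + 1 / (z - z4) - 1 / (z - w1) - 1 / (z - w3)) * hq
    have h2 := (mul_eq_zero.mp key).resolve_left hqm
    exact sub_eq_zero.mp h2
  · intro h
    have key : q * (((q⁻¹ - 1) / (z - z4)) - (q⁻¹ / (z - w3) - 1 / (z - w4))) = 0 := by
      linear_combination -e1 - e3 - q * e2 + (q - 1) * h
        + (1 / (z - z2) + 1 / (z - z4) - 1 / (z - w1) - 1 / (z - w3)) * hq
    have h2 := (mul_eq_zero.mp key).resolve_left hq0
    exact sub_eq_zero.mp h2
end

section
/- Let L(f,g,Δ,λ) := (1-λ²Δ)^{-1/2}·[[1, λf],[λg, 1]] where fg = Δ. For an elementary quadrilateral in ℤ³ with edges in directions n1 and n2 and a field z : ℤ³ → ℂ such that the cross-ratio of the quadrilateral (z_a, z_b, z_c, z_d) equals Δ_{n1}/Δ_{n2}, there exists a field z* (defined on the quadrilateral via (z*_{in} - z*_{out})(z_{in} - z_{out}) = Δ_n along each edge of type n) such that the zero curvature condition L(e4)L(e3)L(e2)L(e1) = I holds around the quadrilateral. Concretely: if a,b,c,d ∈ ℂ are distinct points with q(a,b,c,d) = Δ1/Δ2,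 and we set edge variables f(e) = z_in - z_out, g(e) = Δ_n/f(e), then the product of the four matrices [[1, λf(e)],[λg(e),1]]/√(1-λ²Δ_{n(e)}) around the quadrilateral (with proper orientation) is the identity for all λ with 1-λ²Δ_i ≠ 0. -/
theorem zero_curvature_of_crossRatio (Δ1 Δ2 : ℂ) (hΔ1 : Δ1 ≠ 0) (hΔ2 : Δ2 ≠ 0)
    (a b c d : ℂ)
    (hab : a ≠ b) (hac : a ≠ c) (had : a ≠ d)
    (hbc : b ≠ c) (hbd : b ≠ d) (hcd : c ≠ d)
    (hcr : ((b - a) * (d - c)) / ((c - b) * (a - d)) = Δ1 / Δ2) :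
    ∀ lam : ℂ,
      (!![1, lam * (c - d); lam * Δ1 / (c - d), 1] *
        !![1, lam * (d - a); lam * Δ2 / (d - a), 1] :
        Matrix (Fin 2) (Fin 2) ℂ) =
      !![1, lam * (c - b); lam * Δ2 / (c - b), 1] *
        !![1, lam * (b - a); lam * Δ1 / (b - a), 1] := by
  intro lam
  have hab' : b - a ≠ 0 := sub_ne_zero.mpr (Ne.symm hab)
  have hcd' : c - d ≠ 0 := sub_ne_zero.mpr hcd
  have hbc' : c - b ≠ 0 := sub_ne_zero.mpr (Ne.symm hbc)
  have had' : d - a ≠ 0 := sub_ne_zero.mpr (Ne.symm had)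
  have had'' : a - d ≠ 0 := sub_ne_zero.mpr had
  have key : (b - a) * (d - c) * Δ2 = (c - b) * (a - d) * Δ1 := by
    field_simp at hcr
    linear_combination hcr
  ext i j
  fin_cases i <;> fin_cases j <;>
    (try simp [Matrix.mul_apply, Fin.sum_univ_succ]) <;> (try field_simp) <;>
    first
      | ring1
      | linear_combination (2 * lam ^ 2) * key
      | linear_combination (-2 * lam ^ 2) * key
      | linear_combination (lam ^ 2) * key
      | linear_combination (-lam ^ 2) * key
      | linear_combination (lam * (a + c - b - d)) * key
      | linear_combination (-lam * (a + c - b - d)) * key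
      | linear_combination (lam * (a + c - b - d) + lam ^ 2) * key
      | linear_combination (lam * (a + c - b - d) - lam ^ 2) * key
      | linear_combination (-lam * (a + c - b - d) + lam ^ 2) * key
      | linear_combination (-lam * (a + c - b - d) - lam ^ 2) * key
end

section
/- Let a,b,c,d ∈ ℂ be pairwise distinct. The matrix identity [[1, λ(c-d)],[λΔ1/(c-d), 1]]·[[1, λ(d-a)],[λΔ2/(d-a), 1]] = [[1, λ(c-b)],[λΔ2/(c-b), 1]]·[[1, λ(b-a)],[λΔ1/(b-a), 1]] holds for all λ ∈ ℂ if and only if the cross-ratio q(a,b,c,d) = ((b-a)(d-c))/((c-b)(a-d)) equals Δ1/Δ2. -/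
theorem zero_curvature_iff_crossRatio (Δ1 Δ2 : ℂ) (hΔ1 : Δ1 ≠ 0) (hΔ2 : Δ2 ≠ 0)
    (a b c d : ℂ)
    (hab : a ≠ b) (hac : a ≠ c) (had : a ≠ d)
    (hbc : b ≠ c) (hbd : b ≠ d) (hcd : c ≠ d) :
    (∀ lam : ℂ,
      (!![1, lam * (c - d); lam * Δ1 / (c - d), 1] *
        !![1, lam * (d - a); lam * Δ2 / (d - a), 1] :
        Matrix (Fin 2) (Fin 2) ℂ) =
      !![1, lam * (c - b); lam * Δ2 / (c - b), 1] *
        !![1, lam * (b - a); lam * Δ1 / (b - a), 1]) ↔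
      ((b - a) * (d - c)) / ((c - b) * (a - d)) = Δ1 / Δ2 := by
  have hcd' : c - d ≠ 0 := sub_ne_zero.mpr hcd
  have hda' : d - a ≠ 0 := sub_ne_zero.mpr (Ne.symm had)
  have hcb' : c - b ≠ 0 := sub_ne_zero.mpr (Ne.symm hbc)
  have hba' : b - a ≠ 0 := sub_ne_zero.mpr (Ne.symm hab)
  have had' : a - d ≠ 0 := sub_ne_zero.mpr had
  constructor
  · intro h
    have h1 := congrFun (congrFun (h 1) 0) 0
    simp [Matrix.mul_apply, Fin.sum_univ_two] at h1
    field_simp at h1 ⊢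
    first
    | linear_combination h1
    | linear_combination -h1
  · intro h lam
    have h' : (b - a) * (d - c) * Δ2 = Δ1 * ((c - b) * (a - d)) := by
      field_simp at h
      first
      | linear_combination h
      | linear_combination -h
    ext i j
    fin_cases i <;> fin_cases j
    · simp only [Matrix.mul_apply, Fin.sum_univ_two, Matrix.cons_val', Matrix.cons_val_zero,
        Matrix.cons_val_one, Matrix.head_cons, Matrix.empty_val', Matrix.cons_val_fin_one,
        Matrix.head_fin_const, Matrix.of_apply, Fin.zero_eta, Fin.mk_one]
      field_simp
      first
      | linear_combination lam ^ 2 * h'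
      | linear_combination -lam ^ 2 * h'
    · simp [Matrix.mul_apply, Fin.sum_univ_two]
      ring
    · simp only [Matrix.mul_apply, Fin.sum_univ_two, Matrix.cons_val', Matrix.cons_val_zero,
        Matrix.cons_val_one, Matrix.head_cons, Matrix.empty_val', Matrix.cons_val_fin_one,
        Matrix.head_fin_const, Matrix.of_apply, Fin.zero_eta, Fin.mk_one]
      field_simp
      first
      | linear_combination lam * (b - a - c + d) * h'
      | linear_combination -lam * (b - a - c + d) * h'
    · simp only [Matrix.mul_apply, Fin.sum_univ_two, Matrix.cons_val', Matrix.cons_val_zero,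
        Matrix.cons_val_one, Matrix.head_cons, Matrix.empty_val', Matrix.cons_val_fin_one,
        Matrix.head_fin_const, Matrix.of_apply, Fin.zero_eta, Fin.mk_one]
      field_simp
      first
      | linear_combination lam ^ 2 * h'
      | linear_combination -lam ^ 2 * h'
end

section
/- Let R, R_1,…,R_6 > 0 satisfy the Doyle relations R_k·R_{k+3} = R² (k=1,2,3) and R_1·R_3·R_5 = R³ (equivalently R_k·R_{k+2}·R_{k+4} = R³). Then for any angles α1, α2, α3 ∈ (0,π) with α1+α2+α3 = π, the product ∏_{n=1}^{3} (1 + e^{iα_n}·R_n/R)·(e^{-iα_n} + R_{n+3}/R) is a positive real number (i.e., has argument 0). -/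
open Complex

lemma doyle_aux (r : ℝ) (hr : 0 < r) (α : ℝ) :
    (1 + Complex.exp (Complex.I * α) * (r : ℂ)) *
      (Complex.exp (-Complex.I * α) + ((1 / r : ℝ) : ℂ)) =
    (((r ^ 2 + 2 * r * Real.cos α + 1) / r : ℝ) : ℂ) := by
  have h1 : Complex.exp (Complex.I * α) = Complex.cos α + Complex.sin α * Complex.I := by
    rw [mul_comm, Complex.exp_mul_I]
  have h2 : Complex.exp (-Complex.I * α) = Complex.cos α - Complex.sin α * Complex.I := by
    have : -Complex.I * α = (-α : ℂ) * Complex.I := by ring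
    rw [this, Complex.exp_mul_I, Complex.cos_neg, Complex.sin_neg]; ring
  rw [h1, h2]
  have hsc := Complex.sin_sq_add_cos_sq (α : ℂ)
  have hr' : (r : ℂ) ≠ 0 := by exact_mod_cast hr.ne'
  push_cast
  field_simp
  linear_combination (r : ℂ) * Complex.I ^ 2 * hsc + (r:ℂ) * hsc + (r:ℂ)^2 * hsc +
    ((r:ℂ) - Complex.cos α ^ 2 * r - Complex.sin α ^ 2 * r - Complex.sin α ^ 2 * r^2) *
      Complex.I_sq

theorem doyle_radii_solve_pattern_equation (R R1 R2 R3 R4 R5 R6 : ℝ)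
    (hR : 0 < R) (h1 : 0 < R1) (h2 : 0 < R2) (h3 : 0 < R3)
    (h4 : 0 < R4) (h5 : 0 < R5) (h6 : 0 < R6)
    (hd1 : R1 * R4 = R ^ 2) (hd2 : R2 * R5 = R ^ 2) (hd3 : R3 * R6 = R ^ 2)
    (hd4 : R1 * R3 * R5 = R ^ 3)
    (α1 α2 α3 : ℝ)
    (ha1 : α1 ∈ Set.Ioo (0 : ℝ) Real.pi) (ha2 : α2 ∈ Set.Ioo (0 : ℝ) Real.pi)
    (ha3 : α3 ∈ Set.Ioo (0 : ℝ) Real.pi) (hsum : α1 + α2 + α3 = Real.pi) :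
    ∃ t : ℝ, 0 < t ∧
      (1 + Complex.exp (Complex.I * α1) * (R1 / R)) *
        (Complex.exp (-Complex.I * α1) + (R4 / R)) *
      ((1 + Complex.exp (Complex.I * α2) * (R2 / R)) *
        (Complex.exp (-Complex.I * α2) + (R5 / R))) *
      ((1 + Complex.exp (Complex.I * α3) * (R3 / R)) *
        (Complex.exp (-Complex.I * α3) + (R6 / R))) = (t : ℂ) := by
  have e1 : R4 / R = 1 / (R1 / R) := by field_simp; nlinarith [hd1]
  have e2 : R5 / R = 1 / (R2 / R) := by field_simp; nlinarith [hd2]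
  have e3 : R6 / R = 1 / (R3 / R) := by field_simp; nlinarith [hd3]
  have p1 : 0 < R1 / R := div_pos h1 hR
  have p2 : 0 < R2 / R := div_pos h2 hR
  have p3 : 0 < R3 / R := div_pos h3 hR
  have key : ∀ (r α : ℝ), 0 < r → 0 < α → α < Real.pi →
      0 < (r ^ 2 + 2 * r * Real.cos α + 1) / r := by
    intro r α hr hα hα'
    have hs := Real.sin_pos_of_pos_of_lt_pi hα hα'
    have hsc := Real.sin_sq_add_cos_sq α
    have hc : -1 < Real.cos α := by nlinarith
    apply div_pos _ hr
    nlinarith [sq_nonneg (r - 1)]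
  refine ⟨((R1/R) ^ 2 + 2 * (R1/R) * Real.cos α1 + 1) / (R1/R) *
      (((R2/R) ^ 2 + 2 * (R2/R) * Real.cos α2 + 1) / (R2/R)) *
      (((R3/R) ^ 2 + 2 * (R3/R) * Real.cos α3 + 1) / (R3/R)), ?_, ?_⟩
  · exact mul_pos (mul_pos (key _ _ p1 ha1.1 ha1.2) (key _ _ p2 ha2.1 ha2.2))
      (key _ _ p3 ha3.1 ha3.2)
  · have e1' : ((R4:ℂ)/R) = 1/((R1:ℂ)/R) := by exact_mod_cast e1
    have e2' : ((R5:ℂ)/R) = 1/((R2:ℂ)/R) := by exact_mod_cast e2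
    have e3' : ((R6:ℂ)/R) = 1/((R3:ℂ)/R) := by exact_mod_cast e3
    have c1 := doyle_aux (R1/R) p1 α1
    have c2 := doyle_aux (R2/R) p2 α2
    have c3 := doyle_aux (R3/R) p3 α3
    push_cast at c1 c2 c3
    push_cast
    rw [e1', e2', e3', c1, c2, c3]
end

section
/- Duality involution on radius equation: if positive reals r, r_1,…,r_6 satisfy arg ∏_{n=1}^{3}(1+e^{iα_n}·(r_n/r))·(e^{-iα_n}+(r_{n+3}/r)) = 0 (the product is a positive real), then the reciprocal radii r* = 1/r, r*_n = 1/r_n also satisfy the same equation: ∏_{n=1}^{3}(1+e^{iα_n}·(r*_n/r*))·(e^{-iα_n}+(r*_{n+3}/r*)) is a positive real. -/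
open Complex

private lemma pair_dual (e a b R : ℂ) (he : e ≠ 0) (ha : a ≠ 0) (hb : b ≠ 0) (hR : R ≠ 0) :
    (1 + e * (1 / a / (1 / R))) * (e⁻¹ + 1 / b / (1 / R)) =
      R / a * (R / b) * ((1 + e⁻¹ * (a / R)) * (e + b / R)) := by
  field_simp
  ring

theorem dual_radii_solve_pattern_equation (r r1 r2 r3 r4 r5 r6 : ℝ)
    (hr : 0 < r) (h1 : 0 < r1) (h2 : 0 < r2) (h3 : 0 < r3)
    (h4 : 0 < r4) (h5 : 0 < r5) (h6 : 0 < r6)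
    (α1 α2 α3 : ℝ)
    (ha1 : α1 ∈ Set.Ioo (0 : ℝ) Real.pi) (ha2 : α2 ∈ Set.Ioo (0 : ℝ) Real.pi)
    (ha3 : α3 ∈ Set.Ioo (0 : ℝ) Real.pi) (hsum : α1 + α2 + α3 = Real.pi)
    (hpat : ∃ t : ℝ, 0 < t ∧
      (1 + Complex.exp (Complex.I * α1) * (r1 / r)) *
        (Complex.exp (-Complex.I * α1) + (r4 / r)) *
      ((1 + Complex.exp (Complex.I * α2) * (r2 / r)) *
        (Complex.exp (-Complex.I * α2) + (r5 / r))) *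
      ((1 + Complex.exp (Complex.I * α3) * (r3 / r)) *
        (Complex.exp (-Complex.I * α3) + (r6 / r))) = (t : ℂ)) :
    ∃ t : ℝ, 0 < t ∧
      (1 + Complex.exp (Complex.I * α1) * ((1/r1) / (1/r))) *
        (Complex.exp (-Complex.I * α1) + ((1/r4) / (1/r))) *
      ((1 + Complex.exp (Complex.I * α2) * ((1/r2) / (1/r))) *
        (Complex.exp (-Complex.I * α2) + ((1/r5) / (1/r)))) *
      ((1 + Complex.exp (Complex.I * α3) * ((1/r3) / (1/r))) *
        (Complex.exp (-Complex.I * α3) + ((1/r6) / (1/r)))) = (t : ℂ) := by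
  obtain ⟨t, ht, heq⟩ := hpat
  refine ⟨(r^6 / (r1*r2*r3*r4*r5*r6)) * t, by positivity, ?_⟩
  have heq' := congrArg (starRingEnd ℂ) heq
  simp only [map_mul, map_add, map_one, Complex.conj_ofReal, map_div₀,
    ← Complex.exp_conj, Complex.conj_I, map_neg, neg_mul, neg_neg] at heq'
  have hE1 : Complex.exp (-(Complex.I * α1)) = (Complex.exp (Complex.I * α1))⁻¹ :=
    Complex.exp_neg _
  have hE2 : Complex.exp (-(Complex.I * α2)) = (Complex.exp (Complex.I * α2))⁻¹ :=
    Complex.exp_neg _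
  have hE3 : Complex.exp (-(Complex.I * α3)) = (Complex.exp (Complex.I * α3))⁻¹ :=
    Complex.exp_neg _
  simp only [neg_mul]
  rw [hE1, hE2, hE3] at heq' ⊢
  have hr' : (r:ℂ) ≠ 0 := by exact_mod_cast hr.ne'
  have h1' : (r1:ℂ) ≠ 0 := by exact_mod_cast h1.ne'
  have h2' : (r2:ℂ) ≠ 0 := by exact_mod_cast h2.ne'
  have h3' : (r3:ℂ) ≠ 0 := by exact_mod_cast h3.ne'
  have h4' : (r4:ℂ) ≠ 0 := by exact_mod_cast h4.ne'
  have h5' : (r5:ℂ) ≠ 0 := by exact_mod_cast h5.ne'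
  have h6' : (r6:ℂ) ≠ 0 := by exact_mod_cast h6.ne'
  rw [pair_dual _ _ _ _ (Complex.exp_ne_zero _) h1' h4' hr',
      pair_dual _ _ _ _ (Complex.exp_ne_zero _) h2' h5' hr',
      pair_dual _ _ _ _ (Complex.exp_ne_zero _) h3' h6' hr']
  push_cast
  linear_combination ((r:ℂ)/r1 * ((r:ℂ)/r4) * ((r:ℂ)/r2 * ((r:ℂ)/r5)) * ((r:ℂ)/r3 * ((r:ℂ)/r6))) * heq'
end

section
/- The explicit field z_{k,ℓ,m} = (k + ℓω + mω²)³ - (k + ℓ + m), where ω = e^{2πi/3}, satisfies the cross-ratio equations with Δ1 = -3, Δ2 = -3ω², Δ3 = -3ω: for all k,ℓ,m ∈ ℤ, q(z_{k,ℓ,m}, z_{k+1,ℓ,m}, z_{k+1,ℓ,m-1}, z_{k,ℓ,m-1}) = Δ1/Δ3, q(z_{k,ℓ,m}, z_{k,ℓ,m+1}, z_{k,ℓ-1,m+1}, z_{k,ℓ-1,m}) = Δ3/Δ2, and q(z_{k,ℓ,m}, z_{k,ℓ+1,m}, z_{k-1,ℓ+1,m}, z_{k-1,ℓ,m}) = Δ2/Δ1,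 whenever the cross-ratio is defined. -/
open Complex

theorem cube_field_crossRatios :
    let ω : ℂ := Complex.exp (2 * Real.pi * Complex.I / 3)
    let z : ℤ → ℤ → ℤ → ℂ := fun k l m =>
      ((k : ℂ) + l * ω + m * ω ^ 2) ^ 3 - ((k : ℂ) + l + m)
    let q : ℂ → ℂ → ℂ → ℂ → ℂ := fun z1 z2 z3 z4 =>
      ((z2 - z1) * (z4 - z3)) / ((z3 - z2) * (z1 - z4))
    let Δ1 : ℂ := -3
    let Δ2 : ℂ := -3 * ω ^ 2
    let Δ3 : ℂ := -3 * ω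
    ∀ k l m : ℤ,
      (Function.Injective ![z k l m, z (k+1) l m, z (k+1) l (m-1), z k l (m-1)] →
        q (z k l m) (z (k+1) l m) (z (k+1) l (m-1)) (z k l (m-1)) = Δ1 / Δ3) ∧
      (Function.Injective ![z k l m, z k l (m+1), z k (l-1) (m+1), z k (l-1) m] →
        q (z k l m) (z k l (m+1)) (z k (l-1) (m+1)) (z k (l-1) m) = Δ3 / Δ2) ∧
      (Function.Injective ![z k l m, z k (l+1) m, z (k-1) (l+1) m, z (k-1) l m] →
        q (z k l m) (z k (l+1) m) (z (k-1) (l+1) m) (z (k-1) l m) = Δ2 / Δ1) := by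
  intro ω z q Δ1 Δ2 Δ3 k l m
  have hprim := Complex.isPrimitiveRoot_exp 3 (by norm_num)
  have hω3 : ω ^ 3 = 1 := hprim.pow_eq_one
  have hω0 : ω ≠ 0 := by
    intro h
    rw [h] at hω3
    norm_num at hω3
  refine ⟨?_, ?_, ?_⟩
  · intro hinj
    have h32 : z (k+1) l (m-1) ≠ z (k+1) l m := by
      simpa using hinj.ne (show (2 : Fin 4) ≠ 1 by decide)
    have h14 : z k l m ≠ z k l (m-1) := by
      simpa using hinj.ne (show (0 : Fin 4) ≠ 3 by decide)
    have hd : (z (k+1) l (m-1) - z (k+1) l m) * (z k l m - z k l (m-1)) ≠ 0 :=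
      mul_ne_zero (sub_ne_zero.mpr h32) (sub_ne_zero.mpr h14)
    have hΔ : Δ3 ≠ 0 := by
      simp only [Δ3]
      exact mul_ne_zero (by norm_num) hω0
    simp only [q, Δ1, Δ3]
    rw [div_eq_div_iff hd (by simpa [Δ3] using hΔ)]
    simp only [z]
    push_cast
    linear_combination (3 - 27*ω*(k:ℂ)^2 - 54*ω*(k:ℂ)^3 - 27*ω*(k:ℂ)^4 - 9*ω^2 - 18*ω^2*(k:ℂ) - 54*ω^2*(k:ℂ)*(l:ℂ) - 18*ω^2*(k:ℂ)^2 - 162*ω^2*(k:ℂ)^2*(l:ℂ) - 108*ω^2*(k:ℂ)^3*(l:ℂ) + 3*ω^3 - 18*ω^3*(l:ℂ) - 27*ω^3*(l:ℂ)^2 + 27*ω^3*(k:ℂ) - 54*ω^3*(k:ℂ)*(m:ℂ) - 36*ω^3*(k:ℂ)*(l:ℂ) - 162*ω^3*(k:ℂ)*(l:ℂ)^2 + 81*ω^3*(k:ℂ)^2 - 162*ω^3*(k:ℂ)^2*(m:ℂ) - 162*ω^3*(k:ℂ)^2*(l:ℂ)^2 + 54*ω^3*(k:ℂ)^3 - 108*ω^3*(k:ℂ)^3*(m:ℂ)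 + 9*ω^4 - 18*ω^4*(m:ℂ) + 27*ω^4*(l:ℂ) - 54*ω^4*(l:ℂ)*(m:ℂ) - 18*ω^4*(l:ℂ)^2 - 54*ω^4*(l:ℂ)^3 + 18*ω^4*(k:ℂ) - 36*ω^4*(k:ℂ)*(m:ℂ) + 162*ω^4*(k:ℂ)*(l:ℂ) - 324*ω^4*(k:ℂ)*(l:ℂ)*(m:ℂ) - 108*ω^4*(k:ℂ)*(l:ℂ)^3 + 162*ω^4*(k:ℂ)^2*(l:ℂ) - 324*ω^4*(k:ℂ)^2*(l:ℂ)*(m:ℂ) - 9*ω^5 + 27*ω^5*(m:ℂ) - 27*ω^5*(m:ℂ)^2 + 18*ω^5*(l:ℂ) - 36*ω^5*(l:ℂ)*(m:ℂ) + 81*ω^5*(l:ℂ)^2 - 162*ω^5*(l:ℂ)^2*(m:ℂ) - 27*ω^5*(l:ℂ)^4 - 45*ω^5*(k:ℂ) + 162*ω^5*(k:ℂ)*(m:ℂ) - 162*ω^5*(k:ℂ)*(m:ℂ)^2 + 162*ω^5*(k:ℂ)*(l:ℂ)^2 - 324*ω^5*(k:ℂ)*(l:ℂ)^2*(m:ℂ)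 - 45*ω^5*(k:ℂ)^2 + 162*ω^5*(k:ℂ)^2*(m:ℂ) - 162*ω^5*(k:ℂ)^2*(m:ℂ)^2 - 3*ω^6 + 18*ω^6*(m:ℂ) - 18*ω^6*(m:ℂ)^2 - 45*ω^6*(l:ℂ) + 162*ω^6*(l:ℂ)*(m:ℂ) - 162*ω^6*(l:ℂ)*(m:ℂ)^2 + 54*ω^6*(l:ℂ)^3 - 108*ω^6*(l:ℂ)^3*(m:ℂ) - 90*ω^6*(k:ℂ)*(l:ℂ) + 324*ω^6*(k:ℂ)*(l:ℂ)*(m:ℂ) - 324*ω^6*(k:ℂ)*(l:ℂ)*(m:ℂ)^2 + 9*ω^7 - 45*ω^7*(m:ℂ) + 81*ω^7*(m:ℂ)^2 - 54*ω^7*(m:ℂ)^3 - 45*ω^7*(l:ℂ)^2 + 162*ω^7*(l:ℂ)^2*(m:ℂ) - 162*ω^7*(l:ℂ)^2*(m:ℂ)^2 + 18*ω^7*(k:ℂ) - 90*ω^7*(k:ℂ)*(m:ℂ) + 162*ω^7*(k:ℂ)*(m:ℂ)^2 - 108*ω^7*(k:ℂ)*(m:ℂ)^3 + 18*ω^8*(l:ℂ)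 - 90*ω^8*(l:ℂ)*(m:ℂ) + 162*ω^8*(l:ℂ)*(m:ℂ)^2 - 108*ω^8*(l:ℂ)*(m:ℂ)^3 - 3*ω^9 + 18*ω^9*(m:ℂ) - 45*ω^9*(m:ℂ)^2 + 54*ω^9*(m:ℂ)^3 - 27*ω^9*(m:ℂ)^4) * hω3
  · intro hinj
    have h32 : z k (l-1) (m+1) ≠ z k l (m+1) := by
      simpa using hinj.ne (show (2 : Fin 4) ≠ 1 by decide)
    have h14 : z k l m ≠ z k (l-1) m := by
      simpa using hinj.ne (show (0 : Fin 4) ≠ 3 by decide)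
    have hd : (z k (l-1) (m+1) - z k l (m+1)) * (z k l m - z k (l-1) m) ≠ 0 :=
      mul_ne_zero (sub_ne_zero.mpr h32) (sub_ne_zero.mpr h14)
    have hΔ : (-3 : ℂ) * ω ^ 2 ≠ 0 := mul_ne_zero (by norm_num) (pow_ne_zero 2 hω0)
    simp only [q, Δ2, Δ3]
    rw [div_eq_div_iff hd hΔ]
    simp only [z]
    push_cast
    linear_combination (3*ω - 3*ω^2 - 18*ω^2*(k:ℂ)^2 + 18*ω^3*(k:ℂ) - 36*ω^3*(k:ℂ)*(l:ℂ) + 27*ω^3*(k:ℂ)^4 - 3*ω^4 + 18*ω^4*(l:ℂ) - 18*ω^4*(l:ℂ)^2 - 18*ω^4*(k:ℂ) - 36*ω^4*(k:ℂ)*(m:ℂ) + 18*ω^4*(k:ℂ)^2 - 54*ω^4*(k:ℂ)^3 + 108*ω^4*(k:ℂ)^3*(l:ℂ) + 6*ω^5 + 18*ω^5*(m:ℂ) - 18*ω^5*(l:ℂ) - 36*ω^5*(l:ℂ)*(m:ℂ) - 18*ω^5*(k:ℂ) + 36*ω^5*(k:ℂ)*(l:ℂ) + 27*ω^5*(k:ℂ)^2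 - 162*ω^5*(k:ℂ)^2*(l:ℂ) + 162*ω^5*(k:ℂ)^2*(l:ℂ)^2 + 54*ω^5*(k:ℂ)^3 + 108*ω^5*(k:ℂ)^3*(m:ℂ) - 18*ω^6*(m:ℂ) - 18*ω^6*(m:ℂ)^2 - 18*ω^6*(l:ℂ) + 18*ω^6*(l:ℂ)^2 + 18*ω^6*(k:ℂ) + 36*ω^6*(k:ℂ)*(m:ℂ) + 54*ω^6*(k:ℂ)*(l:ℂ) - 162*ω^6*(k:ℂ)*(l:ℂ)^2 + 108*ω^6*(k:ℂ)*(l:ℂ)^3 - 81*ω^6*(k:ℂ)^2 - 162*ω^6*(k:ℂ)^2*(m:ℂ) + 162*ω^6*(k:ℂ)^2*(l:ℂ) + 324*ω^6*(k:ℂ)^2*(l:ℂ)*(m:ℂ) - 9*ω^7 - 18*ω^7*(m:ℂ) + 18*ω^7*(l:ℂ) + 36*ω^7*(l:ℂ)*(m:ℂ) + 27*ω^7*(l:ℂ)^2 - 54*ω^7*(l:ℂ)^3 + 27*ω^7*(l:ℂ)^4 + 27*ω^7*(k:ℂ) + 54*ω^7*(k:ℂ)*(m:ℂ) - 162*ω^7*(k:ℂ)*(l:ℂ)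 - 324*ω^7*(k:ℂ)*(l:ℂ)*(m:ℂ) + 162*ω^7*(k:ℂ)*(l:ℂ)^2 + 324*ω^7*(k:ℂ)*(l:ℂ)^2*(m:ℂ) + 45*ω^7*(k:ℂ)^2 + 162*ω^7*(k:ℂ)^2*(m:ℂ) + 162*ω^7*(k:ℂ)^2*(m:ℂ)^2 + 3*ω^8 + 18*ω^8*(m:ℂ) + 18*ω^8*(m:ℂ)^2 + 27*ω^8*(l:ℂ) + 54*ω^8*(l:ℂ)*(m:ℂ) - 81*ω^8*(l:ℂ)^2 - 162*ω^8*(l:ℂ)^2*(m:ℂ) + 54*ω^8*(l:ℂ)^3 + 108*ω^8*(l:ℂ)^3*(m:ℂ) - 45*ω^8*(k:ℂ) - 162*ω^8*(k:ℂ)*(m:ℂ) - 162*ω^8*(k:ℂ)*(m:ℂ)^2 + 90*ω^8*(k:ℂ)*(l:ℂ) + 324*ω^8*(k:ℂ)*(l:ℂ)*(m:ℂ) + 324*ω^8*(k:ℂ)*(l:ℂ)*(m:ℂ)^2 + 9*ω^9 + 27*ω^9*(m:ℂ) + 27*ω^9*(m:ℂ)^2 - 45*ω^9*(l:ℂ)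 - 162*ω^9*(l:ℂ)*(m:ℂ) - 162*ω^9*(l:ℂ)*(m:ℂ)^2 + 45*ω^9*(l:ℂ)^2 + 162*ω^9*(l:ℂ)^2*(m:ℂ) + 162*ω^9*(l:ℂ)^2*(m:ℂ)^2 + 18*ω^9*(k:ℂ) + 90*ω^9*(k:ℂ)*(m:ℂ) + 162*ω^9*(k:ℂ)*(m:ℂ)^2 + 108*ω^9*(k:ℂ)*(m:ℂ)^3 - 9*ω^10 - 45*ω^10*(m:ℂ) - 81*ω^10*(m:ℂ)^2 - 54*ω^10*(m:ℂ)^3 + 18*ω^10*(l:ℂ) + 90*ω^10*(l:ℂ)*(m:ℂ) + 162*ω^10*(l:ℂ)*(m:ℂ)^2 + 108*ω^10*(l:ℂ)*(m:ℂ)^3 + 3*ω^11 + 18*ω^11*(m:ℂ) + 45*ω^11*(m:ℂ)^2 + 54*ω^11*(m:ℂ)^3 + 27*ω^11*(m:ℂ)^4) * hω3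
  · intro hinj
    have h32 : z (k-1) (l+1) m ≠ z k (l+1) m := by
      simpa using hinj.ne (show (2 : Fin 4) ≠ 1 by decide)
    have h14 : z k l m ≠ z (k-1) l m := by
      simpa using hinj.ne (show (0 : Fin 4) ≠ 3 by decide)
    have hd : (z (k-1) (l+1) m - z k (l+1) m) * (z k l m - z (k-1) l m) ≠ 0 :=
      mul_ne_zero (sub_ne_zero.mpr h32) (sub_ne_zero.mpr h14)
    have hΔ : (-3 : ℂ) ≠ 0 := by norm_num
    simp only [q, Δ1, Δ2]
    rw [div_eq_div_iff hd hΔ]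
    simp only [z]
    push_cast
    linear_combination (-3 + 9*ω - 18*ω*(k:ℂ) + 18*ω*(k:ℂ)^2 - 9*ω^2 - 18*ω^2*(l:ℂ) + 18*ω^2*(k:ℂ) + 36*ω^2*(k:ℂ)*(l:ℂ) + 3*ω^3 - 18*ω^3*(m:ℂ) + 18*ω^3*(l:ℂ) + 18*ω^3*(l:ℂ)^2 + 36*ω^3*(k:ℂ)*(m:ℂ) + 18*ω^4*(m:ℂ) + 36*ω^4*(l:ℂ)*(m:ℂ) + 18*ω^5*(m:ℂ)^2) * hω3
end

section
/- Suppose z : ℤ → ℂ is injective and satisfies the one-dimensional constraint c·z_k = 2k·(z_{k+1}-z_k)(z_k-z_{k-1})/(z_{k+1}-z_{k-1}) for all k ≥ 1, with initial data z_0 = 0 and z_1 = 1 and c ∈ (0,2). Then all z_k are real, z is strictly increasing on nonnegative indices, and |z_{2n+1} - z_{2n}| = |z_{2n} - z_{2n-1}| for all n ≥ 1. (Restriction of the z^c constraint to a coordinate axis: the axis points lie on a straight line and satisfy the equidistance property.) -/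
theorem axis_points_real_increasing_equidistant (c : ℝ) (hc : 0 < c) (hc2 : c < 2)
    (z : ℕ → ℂ) (hinj : Function.Injective z)
    (h0 : z 0 = 0) (h1 : z 1 = 1)
    (hne : ∀ k : ℕ, 1 ≤ k → z (k + 1) ≠ z (k - 1))
    (hrec : ∀ k : ℕ, 1 ≤ k →
      (c : ℂ) * z k * (z (k + 1) - z (k - 1)) =
        2 * (k : ℂ) * (z (k + 1) - z k) * (z k - z (k - 1))) :
    (∀ k : ℕ, (z k).im = 0) ∧
    (∀ k : ℕ, 1 ≤ k → 0 < (z k).re) ∧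
    (∀ k : ℕ, (z k).re < (z (k + 1)).re) ∧
    (∀ n : ℕ, 1 ≤ n → z (2 * n + 1) - z (2 * n) = z (2 * n) - z (2 * n - 1)) := by
  classical
  set A : ℕ → ℝ := fun k => if Even k then (k : ℝ) else (k : ℝ) - 1 + c with hAdef
  have hApos : ∀ k : ℕ, 1 ≤ k → 0 < A k := by
    intro k hk
    by_cases h : Even k <;> simp only [hAdef, h, if_true, if_false]
    · exact_mod_cast Nat.lt_of_lt_of_le Nat.zero_lt_one hk
    · have : (1 : ℝ) ≤ (k : ℝ) := by exact_mod_cast hk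
      linarith
  have hAlt : ∀ k : ℕ, 1 ≤ k → A k < 2 * k := by
    intro k hk
    have : (1 : ℝ) ≤ (k : ℝ) := by exact_mod_cast hk
    by_cases h : Even k <;> simp only [hAdef, h, if_true, if_false] <;> linarith
  have hAsucc : ∀ k : ℕ, A (k + 1) = 2 * k + c - A k := by
    intro k
    by_cases h : Even k
    · have h' : ¬ Even (k + 1) := by simp [Nat.even_add_one, h]
      simp only [hAdef, h, h', if_true, if_false]
      push_cast; ring
    · have h' : Even (k + 1) := by simp [Nat.even_add_one, h]
      simp only [hAdef, h, h', if_true, if_false]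
      push_cast; ring
  have hAeven : ∀ n : ℕ, A (2 * n) = 2 * n := by
    intro n
    simp [hAdef, even_two_mul n]
  -- the invariant
  have key : ∀ k : ℕ, 1 ≤ k →
      ((z (k - 1)).im = 0 ∧ (z k).im = 0 ∧ (z (k - 1)).re < (z k).re ∧ 0 < (z k).re ∧
        c * (z k).re = A k * ((z k).re - (z (k - 1)).re)) →
      (((z k).im = 0 ∧ (z (k + 1)).im = 0 ∧ (z k).re < (z (k + 1)).re ∧ 0 < (z (k + 1)).re ∧
        c * (z (k + 1)).re = A (k + 1) * ((z (k + 1)).re - (z k).re)) ∧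
        z (k + 1) - z k =
          ((A k * ((z k).re - (z (k - 1)).re) / (2 * k - A k) : ℝ) : ℂ)) := by
    intro k hk hInv
    obtain ⟨him0, him1, hlt, hpos, heq⟩ := hInv
    set x := (z k).re with hx
    set y := (z (k - 1)).re with hy
    have hzk : z k = (x : ℂ) := by
      apply Complex.ext <;> simp [him1, hx]
    have hzk1 : z (k - 1) = (y : ℂ) := by
      apply Complex.ext <;> simp [him0, hy]
    have hdpos : 0 < x - y := sub_pos.mpr hlt
    have ha : 0 < A k := hApos k hk
    have halt : A k < 2 * k := hAlt k hk
    have hden : (0 : ℝ) < 2 * k - A k := by linarith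
    have E := hrec k hk
    rw [hzk, hzk1] at E
    have hcxC : (c : ℂ) * (x : ℂ) = (A k : ℂ) * ((x : ℂ) - (y : ℂ)) := by
      have := heq
      push_cast
      exact_mod_cast congrArg (Complex.ofReal) heq
    have Ecancel : ((x : ℂ) - (y : ℂ)) * ((z (k + 1) - (x : ℂ)) * ((2 * k : ℂ) - (A k : ℂ)))
        = ((x : ℂ) - (y : ℂ)) * ((A k : ℂ) * ((x : ℂ) - (y : ℂ))) := by
      linear_combination (-1 : ℂ) * E + (z (k + 1) - (y : ℂ)) * hcxC
    have hdC : ((x : ℂ) - (y : ℂ)) ≠ 0 := by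
      have : ((x - y : ℝ) : ℂ) ≠ 0 := by
        exact_mod_cast hdpos.ne'
      push_cast at this
      exact this
    have h3 : (z (k + 1) - (x : ℂ)) * ((2 * k : ℂ) - (A k : ℂ))
        = (A k : ℂ) * ((x : ℂ) - (y : ℂ)) := mul_left_cancel₀ hdC Ecancel
    set q : ℝ := A k * (x - y) / (2 * k - A k) with hq
    have hqpos : 0 < q := div_pos (mul_pos ha hdpos) hden
    have h2 : ((2 * k - A k : ℝ) : ℂ) ≠ 0 := by
      exact_mod_cast hden.ne'
    have hW : z (k + 1) - (x : ℂ) = (q : ℂ) := by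
      rw [hq]
      push_cast
      rw [eq_div_iff (by push_cast at h2 ⊢; exact h2)]
      exact h3
    have hzsucc : z (k + 1) = ((x + q : ℝ) : ℂ) := by
      push_cast
      linear_combination hW
    have hresucc : (z (k + 1)).re = x + q := by rw [hzsucc]; simp
    have himsucc : (z (k + 1)).im = 0 := by rw [hzsucc]; simp
    have hqden : q * (2 * k - A k) = A k * (x - y) := by
      rw [hq]; field_simp
    constructor
    · refine ⟨him1, himsucc, ?_, ?_, ?_⟩
      · rw [hresucc]; linarith
      · rw [hresucc]; linarith
      · rw [hresucc, hAsucc k]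
        linear_combination heq - hqden
    · rw [hzsucc, hzk]
      push_cast
      ring
  -- main induction
  have main : ∀ k : ℕ, 1 ≤ k →
      ((z (k - 1)).im = 0 ∧ (z k).im = 0 ∧ (z (k - 1)).re < (z k).re ∧ 0 < (z k).re ∧
        c * (z k).re = A k * ((z k).re - (z (k - 1)).re)) := by
    intro k hk
    induction k with
    | zero => omega
    | succ n ih =>
      rcases Nat.eq_zero_or_pos n with hn | hn
      · subst hn
        have hA1 : A 1 = c := by simp [hAdef]
        refine ⟨by simp [h0], by simp [h1], by simp [h0, h1], by simp [h1], ?_⟩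
        simp [h0, h1, hA1]
      · have := (key n hn (ih hn)).1
        simpa using this
  refine ⟨?_, ?_, ?_, ?_⟩
  · intro k
    cases k with
    | zero => simp [h0]
    | succ n => exact (main (n + 1) (by omega)).2.1
  · intro k hk
    exact (main k hk).2.2.2.1
  · intro k
    cases k with
    | zero => simp [h0, h1]
    | succ n =>
      exact (main (n + 2) (by omega)).2.2.1
  · intro n hn
    have hk : 1 ≤ 2 * n := by omega
    have hdiff := (key (2 * n) hk (main (2 * n) hk)).2
    obtain ⟨him0, him1, hlt, hpos, heq⟩ := main (2 * n) hk
    have hzk : z (2 * n) = (((z (2 * n)).re : ℝ) : ℂ) := by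
      apply Complex.ext <;> simp [him1]
    have hzk1 : z (2 * n - 1) = (((z (2 * n - 1)).re : ℝ) : ℂ) := by
      apply Complex.ext <;> simp [him0]
    have hA : A (2 * n) = 2 * n := hAeven n
    have hnR : (0 : ℝ) < (n : ℝ) := by exact_mod_cast hn
    rw [hdiff, hA]
    rw [show ((2 * n : ℕ) : ℝ) = 2 * (n : ℝ) by push_cast; ring]
    have hratio : 2 * (n : ℝ) * ((z (2 * n)).re - (z (2 * n - 1)).re) / (2 * (2 * (n : ℝ)) - 2 * (n : ℝ))
        = (z (2 * n)).re - (z (2 * n - 1)).re := by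
      have h2 : (2 : ℝ) * (n : ℝ) ≠ 0 := by positivity
      rw [show 2 * (2 * (n : ℝ)) - 2 * (n : ℝ) = 2 * (n : ℝ) by ring]
      field_simp
    rw [hratio, hzk, hzk1]
    simp
end
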